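/- Under the monomial ring homomorphism φ* from the Laurent polynomial ring k[x_I^±] (I ranging over r-subsets of [n]) to k[x_{ij}^±] ({i,j} ranging over 2-subsets of [n]) sending x_I to the product of x_{ij} over all 2-subsets {i,j} ⊆ I, each three-term Plücker relation x_{ijA}x_{klA} − x_{ikA}x_{jlA} + x_{ilA}x_{jkA} (for i<j<k<l and A an (r−2)-subset of [n] disjoint from {i,j,k,l}) is sent to (x_{ij}x_{kl} − x_{ik}x_{jl} + x_{il}x_{jk}) times the monomial ∏_{B ⊆ A, |B|=2} x_B² · ∏_{t ∈ A} x_{it}x_{jt}x_{kt}x_{lt}. -/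

import Mathlib

open scoped BigOperators

/-- The Laurent polynomial ring over `k` in variables indexed by the `r`-element
subsets of `[n]`, realized as the group algebra of the free abelian group on those
variables. -/
abbrev LaurentRing (k : Type*) [Field k] (n r : ℕ) :=
  AddMonoidAlgebra k ({S : Finset (Fin n) // S.card = r} →₀ ℤ)

/-- The variable `x_S` of the Laurent ring, for an `r`-subset `S` of `[n]`. -/
noncomputable def Xvar (k : Type*) [Field k] (n r : ℕ) (S : Finset (Fin n))
    (h : S.card = r) : LaurentRing k n r :=
  AddMonoidAlgebra.single (Finsupp.single (⟨S, h⟩ : {S : Finset (Fin n) // S.card = r}) 1) 1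

/-- The exponent map underlying the monomial homomorphism `φ*`: the exponent vector `g`
on `r`-subset variables is sent to the exponent vector on `2`-subset variables obtained
by replacing each `e_I` with `∑_{J ⊆ I, |J| = 2} e_J`. -/
noncomputable def expMap (n r : ℕ) (g : {S : Finset (Fin n) // S.card = r} →₀ ℤ) :
    {T : Finset (Fin n) // T.card = 2} →₀ ℤ :=
  g.sum fun I z => z •
    ∑ J ∈ (I.1.powersetCard 2).attach,
      Finsupp.single
        (⟨J.1, (Finset.mem_powersetCard.mp J.2).2⟩ : {T : Finset (Fin n) // T.card = 2})
        (1 : ℤ)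


lemma prod_single {k : Type*} [Field k] {G : Type*} [AddCommMonoid G]
    {ι : Type*} (s : Finset ι) (g : ι → G) :
    ∏ x ∈ s, AddMonoidAlgebra.single (g x) (1:k) =
      AddMonoidAlgebra.single (∑ x ∈ s, g x) 1 := by
  induction s using Finset.cons_induction with
  | empty => simp [AddMonoidAlgebra.one_def]
  | cons a s ha ih =>
      rw [Finset.prod_cons, Finset.sum_cons, ih, AddMonoidAlgebra.single_mul_single, one_mul]

lemma sum_pair_eq {n : ℕ} (a : Fin n) (A T : Finset (Fin n)) (hT : T.card = 2) :
    ∑ t ∈ A, (if ({a, t} : Finset (Fin n)) = T then (1:ℤ) else 0) =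
      if a ∈ T ∧ T.erase a ⊆ A then 1 else 0 := by
  by_cases ha : a ∈ T
  · obtain ⟨c, hc⟩ : ∃ c, T.erase a = {c} := Finset.card_eq_one.mp
      (by rw [Finset.card_erase_of_mem ha, hT])
    have hca : c ≠ a := by
      have : c ∈ T.erase a := by rw [hc]; exact Finset.mem_singleton_self c
      exact Finset.ne_of_mem_erase this
    have hTeq : T = {a, c} := by
      rw [← Finset.insert_erase ha, hc]
    have key : ∀ t : Fin n, ({a, t} : Finset (Fin n)) = T ↔ t = c := by
      intro t
      constructor
      · intro h
        have ht : t ∈ T := h ▸ Finset.mem_insert_of_mem (Finset.mem_singleton_self t)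
        rw [hTeq] at ht
        rcases Finset.mem_insert.mp ht with h1 | h1
        · exfalso
          have h2 : ({a} : Finset (Fin n)) = T := by
            rw [← h, h1]; simp
          have hc1 : T.card = 1 := by rw [← h2]; simp
          omega
        · exact Finset.mem_singleton.mp h1
      · rintro rfl; exact hTeq.symm
    simp only [key]
    rw [Finset.sum_ite_eq' A c (fun _ => (1:ℤ))]
    simp [ha, hc, Finset.singleton_subset_iff]
  · have : ∀ t ∈ A, ¬(({a, t} : Finset (Fin n)) = T) := by
      intro t _ h
      exact ha (h ▸ Finset.mem_insert_self a {t})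
    rw [Finset.sum_congr rfl (fun t ht => if_neg (this t ht))]
    simp [ha]

lemma Hlem {n : ℕ} (a b : Fin n) (A T : Finset (Fin n)) (hT : T.card = 2)
    (hab : a ≠ b) (haA : a ∉ A) (hbA : b ∉ A) :
    (if T ⊆ insert a (insert b A) then (1:ℤ) else 0) =
      (if T = ({a, b} : Finset (Fin n)) then 1 else 0) + (if T ⊆ A then 1 else 0)
      + (if a ∈ T ∧ T.erase a ⊆ A then 1 else 0)
      + (if b ∈ T ∧ T.erase b ⊆ A then 1 else 0) := by
  by_cases ha : a ∈ T <;> by_cases hb : b ∈ T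
  · -- T = {a, b}
    have hTab : T = {a, b} := by
      apply (Finset.eq_of_subset_of_card_le _ _).symm
      · intro x hx
        rcases Finset.mem_insert.mp hx with rfl | hx
        · exact ha
        · exact Finset.mem_singleton.mp hx ▸ hb
      · rw [hT, Finset.card_insert_of_notMem (by simpa using hab), Finset.card_singleton]
    have h1 : ¬ T ⊆ A := fun h => haA (h ha)
    have h2 : T.erase a = {b} := by
      rw [hTab]; ext x
      simp only [Finset.mem_erase, Finset.mem_insert, Finset.mem_singleton]
      constructor
      · rintro ⟨hxa, rfl | rfl⟩
        · exact absurd rfl hxa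
        · rfl
      · rintro rfl; exact ⟨hab.symm, Or.inr rfl⟩
    have h3 : T.erase b = {a} := by
      rw [hTab]; ext x
      simp only [Finset.mem_erase, Finset.mem_insert, Finset.mem_singleton]
      constructor
      · rintro ⟨hxb, rfl | rfl⟩
        · rfl
        · exact absurd rfl hxb
      · rintro rfl; exact ⟨hab, Or.inl rfl⟩
    have h4 : ¬ (a ∈ T ∧ T.erase a ⊆ A) := by
      rintro ⟨-, h⟩; rw [h2] at h; exact hbA (h (Finset.mem_singleton_self b))
    have h5 : ¬ (b ∈ T ∧ T.erase b ⊆ A) := by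
      rintro ⟨-, h⟩; rw [h3] at h; exact haA (h (Finset.mem_singleton_self a))
    have h6 : T ⊆ insert a (insert b A) := by
      rw [hTab]; intro x hx
      simp only [Finset.mem_insert, Finset.mem_singleton] at hx ⊢
      tauto
    rw [if_pos h6, if_pos hTab, if_neg h1, if_neg h4, if_neg h5]
    ring
  · -- a ∈ T, b ∉ T
    have hTab : T ≠ {a, b} := fun h => hb (h ▸ Finset.mem_insert_of_mem (Finset.mem_singleton_self b))
    have h1 : ¬ T ⊆ A := fun h => haA (h ha)
    have h5 : ¬ (b ∈ T ∧ T.erase b ⊆ A) := fun h => hb h.1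
    have key : T ⊆ insert a (insert b A) ↔ T.erase a ⊆ A := by
      rw [Finset.subset_insert_iff]
      constructor
      · intro h x hx
        rcases Finset.mem_insert.mp (h hx) with rfl | h2
        · exact absurd (Finset.mem_of_mem_erase hx) hb
        · exact h2
      · exact fun h => h.trans (Finset.subset_insert b A)
    by_cases h6 : T.erase a ⊆ A <;> simp [hTab, h1, h5, ha, h6, key]
  · -- b ∈ T, a ∉ T
    have hTab : T ≠ {a, b} := fun h => ha (h ▸ Finset.mem_insert_self a {b})
    have h1 : ¬ T ⊆ A := fun h => hbA (h hb)
    have h5 : ¬ (a ∈ T ∧ T.erase a ⊆ A) := fun h => ha h.1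
    have key : T ⊆ insert a (insert b A) ↔ T.erase b ⊆ A := by
      rw [Finset.subset_insert_iff_of_notMem ha, Finset.subset_insert_iff]
    by_cases h6 : T.erase b ⊆ A <;> simp [hTab, h1, h5, hb, h6, key]
  · -- a ∉ T, b ∉ T
    have hTab : T ≠ {a, b} := fun h => ha (h ▸ Finset.mem_insert_self a {b})
    have key : T ⊆ insert a (insert b A) ↔ T ⊆ A := by
      rw [Finset.subset_insert_iff_of_notMem ha, Finset.subset_insert_iff_of_notMem hb]
    by_cases h6 : T ⊆ A <;> simp [hTab, ha, hb, h6, key]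

noncomputable def fexp {n : ℕ} (S : Finset (Fin n)) : {T : Finset (Fin n) // T.card = 2} →₀ ℤ :=
  ∑ J ∈ (S.powersetCard 2).attach,
    Finsupp.single
      (⟨J.1, (Finset.mem_powersetCard.mp J.2).2⟩ : {T : Finset (Fin n) // T.card = 2}) (1 : ℤ)

lemma fexp_apply {n : ℕ} (S : Finset (Fin n)) (T : {T : Finset (Fin n) // T.card = 2}) :
    fexp S T = if T.1 ⊆ S then 1 else 0 := by
  rw [fexp, Finsupp.finset_sum_apply]
  have : ∀ J : {x // x ∈ S.powersetCard 2},
      (Finsupp.single (⟨J.1, (Finset.mem_powersetCard.mp J.2).2⟩ :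
        {T : Finset (Fin n) // T.card = 2}) (1:ℤ)) T = if J.1 = T.1 then 1 else 0 := by
    intro J
    rw [Finsupp.single_apply]
    congr 1
    simp [Subtype.ext_iff]
  rw [Finset.sum_congr rfl (fun J _ => this J)]
  rw [Finset.sum_attach (S.powersetCard 2) (fun J => if J = T.1 then (1:ℤ) else 0)]
  rw [Finset.sum_ite_eq' (S.powersetCard 2) T.1 (fun _ => (1:ℤ))]
  congr 1
  simp only [Finset.mem_powersetCard, eq_iff_iff]
  exact ⟨fun h => h.1, fun h => ⟨h, T.2⟩⟩

lemma if_eq_comm {α : Type*} [DecidableEq α] (X Y : α) :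
    (if X = Y then (1:ℤ) else 0) = if Y = X then 1 else 0 := by
  by_cases h : X = Y
  · simp [h]
  · simp [h, Ne.symm h]

lemma key_id {n : ℕ} (p q s u : Fin n) (A : Finset (Fin n))
    (hpq : p ≠ q) (hsu : s ≠ u)
    (hp : p ∉ A) (hq : q ∉ A) (hs : s ∉ A) (hu : u ∉ A)
    (hpq2 : ({p, q} : Finset (Fin n)).card = 2)
    (hsu2 : ({s, u} : Finset (Fin n)).card = 2)
    (hpt : ∀ t ∈ A, ({p, t} : Finset (Fin n)).card = 2)
    (hqt : ∀ t ∈ A, ({q, t} : Finset (Fin n)).card = 2)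
    (hst : ∀ t ∈ A, ({s, t} : Finset (Fin n)).card = 2)
    (hut : ∀ t ∈ A, ({u, t} : Finset (Fin n)).card = 2) :
    fexp (insert p (insert q A)) + fexp (insert s (insert u A)) =
      Finsupp.single (⟨{p, q}, hpq2⟩ : {T : Finset (Fin n) // T.card = 2}) (1:ℤ)
      + Finsupp.single (⟨{s, u}, hsu2⟩ : {T : Finset (Fin n) // T.card = 2}) (1:ℤ)
      + ((2:ℕ) • fexp A
        + ∑ t ∈ A.attach,
            (Finsupp.single (⟨{p, t.1}, hpt t.1 t.2⟩ : {T : Finset (Fin n) // T.card = 2}) (1:ℤ)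
             + Finsupp.single (⟨{q, t.1}, hqt t.1 t.2⟩ : {T : Finset (Fin n) // T.card = 2}) (1:ℤ)
             + Finsupp.single (⟨{s, t.1}, hst t.1 t.2⟩ : {T : Finset (Fin n) // T.card = 2}) (1:ℤ)
             + Finsupp.single (⟨{u, t.1}, hut t.1 t.2⟩ : {T : Finset (Fin n) // T.card = 2}) (1:ℤ))) := by
  ext T
  simp only [Finsupp.add_apply, Finsupp.smul_apply, fexp_apply, Finsupp.finset_sum_apply,
    Finsupp.single_apply, Subtype.ext_iff]
  rw [Finset.sum_attach A (fun x =>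
    (((if ({p, x} : Finset (Fin n)) = T.1 then (1:ℤ) else 0)
      + if ({q, x} : Finset (Fin n)) = T.1 then 1 else 0)
      + if ({s, x} : Finset (Fin n)) = T.1 then 1 else 0)
      + if ({u, x} : Finset (Fin n)) = T.1 then 1 else 0)]
  simp only [Finset.sum_add_distrib]
  rw [sum_pair_eq p A T.1 T.2, sum_pair_eq q A T.1 T.2, sum_pair_eq s A T.1 T.2,
    sum_pair_eq u A T.1 T.2,
    Hlem p q A T.1 T.2 hpq hp hq, Hlem s u A T.1 T.2 hsu hs hu,
    if_eq_comm ({p, q} : Finset (Fin n)) T.1, if_eq_comm ({s, u} : Finset (Fin n)) T.1]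
  rw [two_smul]
  ring


lemma expMap_add (n r : ℕ) (g g' : {S : Finset (Fin n) // S.card = r} →₀ ℤ) :
    expMap n r (g + g') = expMap n r g + expMap n r g' := by
  unfold expMap
  apply Finsupp.sum_add_index'
  · intro a; exact zero_smul ℤ _
  · intro a b1 b2; exact add_smul b1 b2 _

lemma expMap_single (n r : ℕ) (S : Finset (Fin n)) (hS : S.card = r) :
    expMap n r (Finsupp.single (⟨S, hS⟩ : {S : Finset (Fin n) // S.card = r}) 1) = fexp S := by
  unfold expMap
  rw [Finsupp.sum_single_index, one_smul]
  · rfl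
  · exact zero_smul ℤ _

/-- Under the monomial homomorphism `φ*` sending `x_I ↦ ∏_{{i,j} ⊆ I} x_{ij}`, the
three-term Plücker relation `x_{ijA}x_{klA} − x_{ikA}x_{jlA} + x_{ilA}x_{jkA}` is sent to
`(x_{ij}x_{kl} − x_{ik}x_{jl} + x_{il}x_{jk}) · ∏_{B ⊆ A, |B|=2} x_B² ·
∏_{t ∈ A} x_{it}x_{jt}x_{kt}x_{lt}`. -/
theorem stmt_9 (k : Type*) [Field k] (n r : ℕ) (hr : 2 ≤ r) (hrn : r ≤ n)
    (φ : LaurentRing k n r →ₐ[k] LaurentRing k n 2)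
    (hφ : ∀ g, φ (AddMonoidAlgebra.single g 1) = AddMonoidAlgebra.single (expMap n r g) 1)
    (i j l m : Fin n) (hij : i < j) (hjl : j < l) (hlm : l < m)
    (A : Finset (Fin n)) (hA : A.card = r - 2)
    (hdisj : Disjoint A ({i, j, l, m} : Finset (Fin n)))
    (hijA : (insert i (insert j A)).card = r)
    (hlmA : (insert l (insert m A)).card = r)
    (hilA : (insert i (insert l A)).card = r)
    (hjmA : (insert j (insert m A)).card = r)
    (himA : (insert i (insert m A)).card = r)
    (hjlA : (insert j (insert l A)).card = r)
    (hij2 : ({i, j} : Finset (Fin n)).card = 2)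
    (hlm2 : ({l, m} : Finset (Fin n)).card = 2)
    (hil2 : ({i, l} : Finset (Fin n)).card = 2)
    (hjm2 : ({j, m} : Finset (Fin n)).card = 2)
    (him2 : ({i, m} : Finset (Fin n)).card = 2)
    (hjl2 : ({j, l} : Finset (Fin n)).card = 2)
    (hit : ∀ t ∈ A, ({i, t} : Finset (Fin n)).card = 2)
    (hjt : ∀ t ∈ A, ({j, t} : Finset (Fin n)).card = 2)
    (hlt : ∀ t ∈ A, ({l, t} : Finset (Fin n)).card = 2)
    (hmt : ∀ t ∈ A, ({m, t} : Finset (Fin n)).card = 2) :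
    φ (Xvar k n r _ hijA * Xvar k n r _ hlmA
        - Xvar k n r _ hilA * Xvar k n r _ hjmA
        + Xvar k n r _ himA * Xvar k n r _ hjlA) =
      (Xvar k n 2 _ hij2 * Xvar k n 2 _ hlm2
        - Xvar k n 2 _ hil2 * Xvar k n 2 _ hjm2
        + Xvar k n 2 _ him2 * Xvar k n 2 _ hjl2) *
      ((∏ B ∈ (A.powersetCard 2).attach,
          (Xvar k n 2 B.1 (Finset.mem_powersetCard.mp B.2).2) ^ 2) *
       ∏ t ∈ A.attach,
          Xvar k n 2 _ (hit t.1 t.2) * Xvar k n 2 _ (hjt t.1 t.2) *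
          Xvar k n 2 _ (hlt t.1 t.2) * Xvar k n 2 _ (hmt t.1 t.2)) := by
  -- distinctness and disjointness facts
  have hij' : i ≠ j := ne_of_lt hij
  have hil' : i ≠ l := ne_of_lt (hij.trans hjl)
  have him' : i ≠ m := ne_of_lt ((hij.trans hjl).trans hlm)
  have hjl' : j ≠ l := ne_of_lt hjl
  have hjm' : j ≠ m := ne_of_lt (hjl.trans hlm)
  have hlm' : l ≠ m := ne_of_lt hlm
  have hiA : i ∉ A := Finset.disjoint_right.mp hdisj (by simp)
  have hjA : j ∉ A := Finset.disjoint_right.mp hdisj (by simp)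
  have hlA : l ∉ A := Finset.disjoint_right.mp hdisj (by simp)
  have hmA : m ∉ A := Finset.disjoint_right.mp hdisj (by simp)
  simp only [Xvar]
  -- combine all products of singles
  simp only [AddMonoidAlgebra.single_pow, one_pow, prod_single, AddMonoidAlgebra.single_mul_single,
    one_mul, mul_one]
  rw [map_add, map_sub, hφ, hφ, hφ]
  simp only [expMap_add, expMap_single]
  rw [add_mul, sub_mul]
  simp only [AddMonoidAlgebra.single_mul_single, one_mul]
  have hM1 : (2:ℕ) • fexp A = ∑ x ∈ (A.powersetCard 2).attach,
      (2:ℕ) • Finsupp.single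
        (⟨x.1, (Finset.mem_powersetCard.mp x.2).2⟩ : {T : Finset (Fin n) // T.card = 2}) (1:ℤ) := by
    rw [fexp, Finset.smul_sum]
  have E1 : fexp (insert i (insert j A)) + fexp (insert l (insert m A)) =
      (Finsupp.single (⟨{i, j}, hij2⟩ : {T : Finset (Fin n) // T.card = 2}) (1:ℤ)
        + Finsupp.single (⟨{l, m}, hlm2⟩ : {T : Finset (Fin n) // T.card = 2}) (1:ℤ))
      + ((∑ x ∈ (A.powersetCard 2).attach,
            (2:ℕ) • Finsupp.single
              (⟨x.1, (Finset.mem_powersetCard.mp x.2).2⟩ : {T : Finset (Fin n) // T.card = 2}) (1:ℤ))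
        + ∑ t ∈ A.attach,
            (Finsupp.single (⟨{i, t.1}, hit t.1 t.2⟩ : {T : Finset (Fin n) // T.card = 2}) (1:ℤ)
             + Finsupp.single (⟨{j, t.1}, hjt t.1 t.2⟩ : {T : Finset (Fin n) // T.card = 2}) (1:ℤ)
             + Finsupp.single (⟨{l, t.1}, hlt t.1 t.2⟩ : {T : Finset (Fin n) // T.card = 2}) (1:ℤ)
             + Finsupp.single (⟨{m, t.1}, hmt t.1 t.2⟩ : {T : Finset (Fin n) // T.card = 2}) (1:ℤ))) := by
    rw [key_id i j l m A hij' hlm' hiA hjA hlA hmA hij2 hlm2 hit hjt hlt hmt]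
    rw [← hM1]
  have E2 : fexp (insert i (insert l A)) + fexp (insert j (insert m A)) =
      (Finsupp.single (⟨{i, l}, hil2⟩ : {T : Finset (Fin n) // T.card = 2}) (1:ℤ)
        + Finsupp.single (⟨{j, m}, hjm2⟩ : {T : Finset (Fin n) // T.card = 2}) (1:ℤ))
      + ((∑ x ∈ (A.powersetCard 2).attach,
            (2:ℕ) • Finsupp.single
              (⟨x.1, (Finset.mem_powersetCard.mp x.2).2⟩ : {T : Finset (Fin n) // T.card = 2}) (1:ℤ))
        + ∑ t ∈ A.attach,
            (Finsupp.single (⟨{i, t.1}, hit t.1 t.2⟩ : {T : Finset (Fin n) // T.card = 2}) (1:ℤ)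
             + Finsupp.single (⟨{j, t.1}, hjt t.1 t.2⟩ : {T : Finset (Fin n) // T.card = 2}) (1:ℤ)
             + Finsupp.single (⟨{l, t.1}, hlt t.1 t.2⟩ : {T : Finset (Fin n) // T.card = 2}) (1:ℤ)
             + Finsupp.single (⟨{m, t.1}, hmt t.1 t.2⟩ : {T : Finset (Fin n) // T.card = 2}) (1:ℤ))) := by
    rw [key_id i l j m A hil' hjm' hiA hlA hjA hmA hil2 hjm2 hit hlt hjt hmt]
    rw [← hM1]
    have hord : (∑ t ∈ A.attach, (Finsupp.single (⟨{i, t.1}, hit t.1 t.2⟩ : {T : Finset (Fin n) // T.card = 2}) (1:ℤ) + Finsupp.single (⟨{l, t.1}, hlt t.1 t.2⟩ : {T : Finset (Fin n) // T.card = 2}) (1:ℤ) + Finsupp.single (⟨{j, t.1}, hjt t.1 t.2⟩ : {T : Finset (Fin n) // T.card = 2}) (1:ℤ) + Finsupp.single (⟨{m, t.1}, hmt t.1 t.2⟩ : {T : Finset (Fin n) // T.card = 2}) (1:ℤ))) = ∑ t ∈ A.attach, (Finsupp.single (⟨{i, t.1}, hit t.1 t.2⟩ : {T : Finset (Fin n)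 // T.card = 2}) (1:ℤ) + Finsupp.single (⟨{j, t.1}, hjt t.1 t.2⟩ : {T : Finset (Fin n) // T.card = 2}) (1:ℤ) + Finsupp.single (⟨{l, t.1}, hlt t.1 t.2⟩ : {T : Finset (Fin n) // T.card = 2}) (1:ℤ) + Finsupp.single (⟨{m, t.1}, hmt t.1 t.2⟩ : {T : Finset (Fin n) // T.card = 2}) (1:ℤ)) :=
      Finset.sum_congr rfl (fun t _ => by abel)
    rw [hord]
  have E3 : fexp (insert i (insert m A)) + fexp (insert j (insert l A)) =
      (Finsupp.single (⟨{i, m}, him2⟩ : {T : Finset (Fin n) // T.card = 2}) (1:ℤ)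
        + Finsupp.single (⟨{j, l}, hjl2⟩ : {T : Finset (Fin n) // T.card = 2}) (1:ℤ))
      + ((∑ x ∈ (A.powersetCard 2).attach,
            (2:ℕ) • Finsupp.single
              (⟨x.1, (Finset.mem_powersetCard.mp x.2).2⟩ : {T : Finset (Fin n) // T.card = 2}) (1:ℤ))
        + ∑ t ∈ A.attach,
            (Finsupp.single (⟨{i, t.1}, hit t.1 t.2⟩ : {T : Finset (Fin n) // T.card = 2}) (1:ℤ)
             + Finsupp.single (⟨{j, t.1}, hjt t.1 t.2⟩ : {T : Finset (Fin n) // T.card = 2}) (1:ℤ)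
             + Finsupp.single (⟨{l, t.1}, hlt t.1 t.2⟩ : {T : Finset (Fin n) // T.card = 2}) (1:ℤ)
             + Finsupp.single (⟨{m, t.1}, hmt t.1 t.2⟩ : {T : Finset (Fin n) // T.card = 2}) (1:ℤ))) := by
    rw [key_id i m j l A him' hjl' hiA hmA hjA hlA him2 hjl2 hit hmt hjt hlt]
    rw [← hM1]
    have hord : (∑ t ∈ A.attach, (Finsupp.single (⟨{i, t.1}, hit t.1 t.2⟩ : {T : Finset (Fin n) // T.card = 2}) (1:ℤ) + Finsupp.single (⟨{m, t.1}, hmt t.1 t.2⟩ : {T : Finset (Fin n) // T.card = 2}) (1:ℤ) + Finsupp.single (⟨{j, t.1}, hjt t.1 t.2⟩ : {T : Finset (Fin n) // T.card = 2}) (1:ℤ) + Finsupp.single (⟨{l, t.1}, hlt t.1 t.2⟩ : {T : Finset (Fin n) // T.card = 2}) (1:ℤ))) = ∑ t ∈ A.attach, (Finsupp.single (⟨{i, t.1}, hit t.1 t.2⟩ : {T : Finset (Fin n) // T.card = 2}) (1:ℤ) + Finsupp.single (⟨{j, t.1}, hjt t.1 t.2⟩ : {T : Finset (Fin n) // T.card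 = 2}) (1:ℤ) + Finsupp.single (⟨{l, t.1}, hlt t.1 t.2⟩ : {T : Finset (Fin n) // T.card = 2}) (1:ℤ) + Finsupp.single (⟨{m, t.1}, hmt t.1 t.2⟩ : {T : Finset (Fin n) // T.card = 2}) (1:ℤ)) :=
      Finset.sum_congr rfl (fun t _ => by abel)
    rw [hord]
  rw [E1, E2, E3]
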